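/- Let K ⊆ ℝ^ℓ be a nonempty closed convex cone, let g : ℝ^n → ℝ^ℓ be K-convex and differentiable, and fix c > 0 and p ∈ ℝ^ℓ. Then the function z ↦ (1/(2c))[dist²(p + c g(z), −K) − ‖p‖²] is convex and differentiable on ℝ^n, and its gradient at z equals ∇g(z) Π_{K*}(p + c g(z)). -/

import Mathlib

open RealInnerProductSpace Pointwise Metric

/-- The dual cone of a set in a real inner product space. -/
def dualCone {F : Type*} [NormedAddCommGroup F] [InnerProductSpace ℝ F] (K : Set F) : Set F :=
  {y | ∀ x ∈ K, 0 ≤ ⟪y, x⟫}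

/-- `p` is the Euclidean projection of `x` onto `S`. -/
def IsProjOn {F : Type*} [NormedAddCommGroup F] [InnerProductSpace ℝ F]
    (S : Set F) (x p : F) : Prop :=
  p ∈ S ∧ ∀ y ∈ S, dist x p ≤ dist x y

/-- `g` is `K`-convex. -/
def KConvex {E F : Type*} [NormedAddCommGroup E] [InnerProductSpace ℝ E]
    [NormedAddCommGroup F] [InnerProductSpace ℝ F] (K : Set F) (g : E → F) : Prop :=
  ∀ z z' : E, ∀ t : ℝ, t ∈ Set.Icc (0 : ℝ) 1 →
    g (t • z' + (1 - t) • z) - t • g z' - (1 - t) • g z ∈ -K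

section myaux
set_option linter.unusedSectionVars false
variable {F : Type*} [NormedAddCommGroup F] [InnerProductSpace ℝ F]

lemma my_le_infDist {S : Set F} {b : ℝ} {x : F} (hS : S.Nonempty)
    (h : ∀ y ∈ S, b ≤ dist x y) : b ≤ infDist x S := by
  by_contra hlt
  push_neg at hlt
  obtain ⟨y, hy, hxy⟩ := (infDist_lt_iff hS).1 hlt
  exact absurd (h y hy) (not_le.2 hxy)

lemma my_proj_vi {S : Set F} (hS : Convex ℝ S) {x u : F} (hu : u ∈ S)
    (hmin : ∀ y ∈ S, dist x u ≤ dist x y) : ∀ w ∈ S, ⟪x - u, w - u⟫ ≤ 0 := by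
  have hne : S.Nonempty := ⟨u, hu⟩
  have h1 : infDist x S = dist x u :=
    le_antisymm (infDist_le_dist_of_mem hu) (my_le_infDist hne hmin)
  have h2 : ‖x - u‖ = ⨅ w : S, ‖x - w‖ := by
    rw [← dist_eq_norm, ← h1, infDist_eq_iInf]
    exact iInf_congr fun w => by rw [dist_eq_norm]
  exact (norm_eq_iInf_iff_real_inner_le_zero hS hu).1 h2

lemma my_proj_unique {S : Set F} {x u v : F} (hu : u ∈ S) (hv : v ∈ S)
    (h1 : ∀ w ∈ S, ⟪x - u, w - u⟫ ≤ 0) (h2 : ∀ w ∈ S, ⟪x - v, w - v⟫ ≤ 0) : u = v := by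
  have a := h1 v hv
  have b := h2 u hu
  have h := real_inner_self_eq_norm_sq (v - u)
  have e : ⟪x - u, v - u⟫ + ⟪x - v, u - v⟫ = ‖v - u‖ ^ 2 := by
    simp only [inner_sub_left, inner_sub_right] at h ⊢
    linarith [real_inner_comm u v, real_inner_comm x v, real_inner_comm x u, h]
  have hn : ‖v - u‖ ^ 2 ≤ 0 := by linarith
  have hz : v - u = 0 := by
    have := sq_nonneg ‖v - u‖
    have h0 : ‖v - u‖ = 0 := by nlinarith
    exact norm_eq_zero.1 h0
  have : v = u := by rwa [sub_eq_zero] at hz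
  exact this.symm

lemma my_proj_lip {S : Set F} {x y u v : F} (hu : u ∈ S) (hv : v ∈ S)
    (h1 : ∀ w ∈ S, ⟪x - u, w - u⟫ ≤ 0) (h2 : ∀ w ∈ S, ⟪y - v, w - v⟫ ≤ 0) :
    ‖u - v‖ ≤ ‖x - y‖ := by
  have a := h1 v hv
  have b := h2 u hu
  have h := real_inner_self_eq_norm_sq (u - v)
  have e : ⟪x - u, v - u⟫ + ⟪y - v, u - v⟫ + ⟪x - y, u - v⟫ = ‖u - v‖ ^ 2 := by
    simp only [inner_sub_left, inner_sub_right] at h ⊢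
    linarith [real_inner_comm x u, real_inner_comm x v, real_inner_comm x y,
      real_inner_comm y u, real_inner_comm y v, real_inner_comm u v, h]
  have key : ‖u - v‖ ^ 2 ≤ ⟪x - y, u - v⟫ := by linarith
  have h3 := real_inner_le_norm (x - y) (u - v)
  rcases eq_or_lt_of_le (norm_nonneg (u - v)) with h0 | h0
  · rw [← h0]; exact norm_nonneg _
  · nlinarith

lemma my_sq_infDist_grad [ProperSpace F] {S : Set F} (hScl : IsClosed S) (hScvx : Convex ℝ S)
    {x u : F} (hu : u ∈ S) (hmin : ∀ y ∈ S, dist x u ≤ dist x y) :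
    HasGradientAt (fun y => infDist y S ^ 2) ((2 : ℝ) • (x - u)) x := by
  have hSne : S.Nonempty := ⟨u, hu⟩
  have hdx : infDist x S = ‖x - u‖ := by
    rw [← dist_eq_norm]
    exact le_antisymm (infDist_le_dist_of_mem hu) (my_le_infDist hSne hmin)
  have hviu := my_proj_vi hScvx hu hmin
  have key : ∀ y : F, |infDist y S ^ 2 - infDist x S ^ 2 - ⟪(2:ℝ) • (x - u), y - x⟫| ≤
      5 * ‖y - x‖ ^ 2 := by
    intro y
    obtain ⟨uy, huy, hd⟩ := hScl.exists_infDist_eq_dist hSne y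
    have hminy : ∀ w ∈ S, dist y uy ≤ dist y w := fun w hw =>
      hd ▸ infDist_le_dist_of_mem hw
    have hviy := my_proj_vi hScvx huy hminy
    have hdy : infDist y S = ‖y - uy‖ := by rw [hd, dist_eq_norm]
    have hip : ⟪(2:ℝ) • (x - u), y - x⟫ = 2 * ⟪x - u, y - x⟫ := real_inner_smul_left _ _ _
    -- upper bound
    have hupper : infDist y S ^ 2 ≤ ‖x - u‖ ^ 2 + 2 * ⟪x - u, y - x⟫ + ‖y - x‖ ^ 2 := by
      have h1 : infDist y S ≤ ‖y - u‖ := by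
        rw [← dist_eq_norm]; exact infDist_le_dist_of_mem hu
      have h2 : ‖y - u‖ ^ 2 = ‖x - u‖ ^ 2 + 2 * ⟪x - u, y - x⟫ + ‖y - x‖ ^ 2 := by
        rw [show y - u = (x - u) + (y - x) by abel, norm_add_sq_real]
      nlinarith [infDist_nonneg (x := y) (s := S), norm_nonneg (y - u)]
    -- lower bound
    have hlower : infDist x S ^ 2 ≤ infDist y S ^ 2 - 2 * ⟪y - uy, y - x⟫ + ‖y - x‖ ^ 2 := by
      have h1 : infDist x S ≤ ‖x - uy‖ := by
        rw [← dist_eq_norm]; exact infDist_le_dist_of_mem huy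
      have h2 : ‖x - uy‖ ^ 2 = ‖y - uy‖ ^ 2 - 2 * ⟪y - uy, y - x⟫ + ‖y - x‖ ^ 2 := by
        rw [show x - uy = (y - uy) + -(y - x) by abel, norm_add_sq_real, inner_neg_right,
          norm_neg]
        ring
      rw [← hdy] at h2
      nlinarith [infDist_nonneg (x := x) (s := S), norm_nonneg (x - uy)]
    have hlip : ‖uy - u‖ ≤ ‖y - x‖ := my_proj_lip huy hu hviy hviu
    have hdiff : |⟪y - uy, y - x⟫ - ⟪x - u, y - x⟫| ≤ 2 * ‖y - x‖ ^ 2 := by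
      have e : ⟪y - uy, y - x⟫ - ⟪x - u, y - x⟫ = ⟪(y - x) + (u - uy), y - x⟫ := by
        rw [← inner_sub_left, show (y - uy) - (x - u) = (y - x) + (u - uy) by abel]
      rw [e]
      have hb : ‖(y - x) + (u - uy)‖ ≤ 2 * ‖y - x‖ := by
        calc ‖(y - x) + (u - uy)‖ ≤ ‖y - x‖ + ‖u - uy‖ := norm_add_le _ _
          _ ≤ 2 * ‖y - x‖ := by
              rw [show u - uy = -(uy - u) by abel, norm_neg]; linarith
      calc |⟪(y - x) + (u - uy), y - x⟫| ≤ ‖(y - x) + (u - uy)‖ * ‖y - x‖ :=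
            abs_real_inner_le_norm _ _
        _ ≤ 2 * ‖y - x‖ ^ 2 := by nlinarith [norm_nonneg (y - x)]
    rw [hdx] at hlower
    rw [hip, hdx]
    rw [abs_le]
    constructor
    · have := abs_le.1 hdiff
      nlinarith
    · nlinarith
  rw [hasGradientAt_iff_isLittleO, Asymptotics.isLittleO_iff]
  intro ε hε
  have hev : ∀ᶠ y in nhds x, ‖y - x‖ ≤ ε / 5 := by
    filter_upwards [Metric.ball_mem_nhds x (show (0:ℝ) < ε / 5 by positivity)] with y hy
    rw [Metric.mem_ball, dist_eq_norm] at hy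
    exact le_of_lt hy
  filter_upwards [hev] with y hy
  have hb := key y
  rw [Real.norm_eq_abs]
  calc |infDist y S ^ 2 - infDist x S ^ 2 - ⟪(2:ℝ) • (x - u), y - x⟫| ≤ 5 * ‖y - x‖ ^ 2 := hb
    _ ≤ ε * ‖y - x‖ := by nlinarith [norm_nonneg (y - x)]

end myaux

/-- convexity and differentiability of the smooth penalty part of the
augmented Lagrangian, together with its gradient formula
`∇(z ↦ (1/(2c))[dist²(p + c g(z), −K) − ‖p‖²]) = ∇g(z) Π_{K*}(p + c g(z))`. -/
theorem penalty_convex_and_gradient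
    {E F : Type*}
    [NormedAddCommGroup E] [InnerProductSpace ℝ E] [FiniteDimensional ℝ E]
    [NormedAddCommGroup F] [InnerProductSpace ℝ F] [FiniteDimensional ℝ F]
    (K : Set F) (hKne : K.Nonempty) (hKcl : IsClosed K) (hKcvx : Convex ℝ K)
    (hKcone : ∀ t : ℝ, 0 < t → ∀ x ∈ K, t • x ∈ K)
    (g : E → F) (g' : E → (E →L[ℝ] F))
    (hgdiff : ∀ z, HasFDerivAt g (g' z) z) (hgK : KConvex K g)
    (c : ℝ) (hc : 0 < c) (p : F) :
    ConvexOn ℝ Set.univ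
      (fun z : E => (1 / (2 * c)) * ((Metric.infDist (p + c • g z) (-K)) ^ 2 - ‖p‖ ^ 2)) ∧
    ∀ z : E, ∀ q : F, IsProjOn (dualCone K) (p + c • g z) q →
      HasGradientAt
        (fun z : E => (1 / (2 * c)) * ((Metric.infDist (p + c • g z) (-K)) ^ 2 - ‖p‖ ^ 2))
        ((g' z).adjoint q) z := by
  constructor
  · -- convexity
    set S : Set F := -K with hSdef
    have hSne : S.Nonempty := hKne.neg
    have hScl : IsClosed S := hKcl.neg
    have hScvx : Convex ℝ S := hKcvx.neg
    have haddK : ∀ a ∈ K, ∀ b ∈ K, a + b ∈ K := by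
      intro a ha b hb
      have h1 : (1/2 : ℝ) • a + (1/2 : ℝ) • b ∈ K :=
        hKcvx ha hb (by norm_num) (by norm_num) (by norm_num)
      have h2 := hKcone 2 (by norm_num) _ h1
      rwa [smul_add, smul_smul, smul_smul, show (2:ℝ) * (1/2) = 1 by norm_num, one_smul,
        one_smul] at h2
    have hmono : ∀ m s : F, s ∈ S → infDist (m + s) S ≤ infDist m S := by
      intro m s hs
      obtain ⟨w, hw, hwd⟩ := hScl.exists_infDist_eq_dist hSne m
      have hws : w + s ∈ S := by
        rw [hSdef, Set.mem_neg, show -(w + s) = -w + -s by abel]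
        exact haddK _ (Set.mem_neg.1 hw) _ (Set.mem_neg.1 hs)
      calc infDist (m + s) S ≤ dist (m + s) (w + s) := infDist_le_dist_of_mem hws
        _ = dist m w := dist_add_right m w s
        _ = infDist m S := hwd.symm
    have hDconv : ∀ x x' : F, ∀ a b : ℝ, 0 ≤ a → 0 ≤ b → a + b = 1 →
        infDist (a • x + b • x') S ≤ a * infDist x S + b * infDist x' S := by
      intro x x' a b ha hb hab
      obtain ⟨w, hw, hwd⟩ := hScl.exists_infDist_eq_dist hSne x
      obtain ⟨w', hw', hwd'⟩ := hScl.exists_infDist_eq_dist hSne x'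
      have hcm : a • w + b • w' ∈ S := hScvx hw hw' ha hb hab
      calc infDist (a • x + b • x') S ≤ dist (a • x + b • x') (a • w + b • w') :=
            infDist_le_dist_of_mem hcm
        _ ≤ a * dist x w + b * dist x' w' := by
            rw [dist_eq_norm, dist_eq_norm, dist_eq_norm,
              show (a • x + b • x') - (a • w + b • w') = a • (x - w) + b • (x' - w') by module]
            calc ‖a • (x - w) + b • (x' - w')‖ ≤ ‖a • (x - w)‖ + ‖b • (x' - w')‖ := norm_add_le _ _
              _ = a * ‖x - w‖ + b * ‖x' - w'‖ := by
                  rw [norm_smul, norm_smul, Real.norm_eq_abs, Real.norm_eq_abs,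
                    abs_of_nonneg ha, abs_of_nonneg hb]
        _ = a * infDist x S + b * infDist x' S := by rw [hwd, hwd']
    refine ⟨convex_univ, ?_⟩
    intro z _ z' _ a b ha hb hab
    have hb1 : b ∈ Set.Icc (0:ℝ) 1 := ⟨hb, by linarith⟩
    have hKc := hgK z z' b hb1
    have ha' : a = 1 - b := by linarith
    subst ha'
    have hsS : c • (g (b • z' + (1-b) • z) - b • g z' - (1-b) • g z) ∈ S := by
      rw [hSdef, Set.mem_neg, ← smul_neg]
      exact hKcone c hc _ (Set.mem_neg.1 hKc)
    have key1 : p + c • g ((1-b) • z + b • z') =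
        (p + c • (b • g z' + (1-b) • g z)) +
          c • (g (b • z' + (1-b) • z) - b • g z' - (1-b) • g z) := by
      rw [show (1 - b) • z + b • z' = b • z' + (1 - b) • z by module]
      module
    have key2 : p + c • (b • g z' + (1-b) • g z) =
        (1-b) • (p + c • g z) + b • (p + c • g z') := by module
    have step1 := hmono (p + c • (b • g z' + (1-b) • g z)) _ hsS
    have step2 := hDconv (p + c • g z) (p + c • g z') (1-b) b (by linarith) hb (by ring)
    have hd : infDist (p + c • g ((1-b) • z + b • z')) S ≤
        (1-b) * infDist (p + c • g z) S + b * infDist (p + c • g z') S := by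
      rw [key1]
      refine step1.trans ?_
      rw [key2]
      exact step2
    have n1 := infDist_nonneg (x := p + c • g ((1-b) • z + b • z')) (s := S)
    have n2 := infDist_nonneg (x := p + c • g z) (s := S)
    have n3 := infDist_nonneg (x := p + c • g z') (s := S)
    have hsq : infDist (p + c • g ((1-b) • z + b • z')) S ^ 2 ≤
        (1-b) * infDist (p + c • g z) S ^ 2 + b * infDist (p + c • g z') S ^ 2 := by
      have h1 := mul_self_le_mul_self n1 hd
      have h2 := mul_nonneg (mul_nonneg (show (0:ℝ) ≤ 1 - b by linarith) hb)
        (sq_nonneg (infDist (p + c • g z) S - infDist (p + c • g z') S))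
      nlinarith [h1, h2]
    have hcpos : (0:ℝ) ≤ 1/(2*c) := by positivity
    have key := mul_le_mul_of_nonneg_left hsq hcpos
    simp only [smul_eq_mul]
    linarith [key]
  · -- gradient
    intro z q hq
    unfold IsProjOn at hq
    obtain ⟨hq1, hq2⟩ := hq
    set S : Set F := -K with hSdef
    have hSne : S.Nonempty := hKne.neg
    have hScl : IsClosed S := hKcl.neg
    have hScvx : Convex ℝ S := hKcvx.neg
    have haddK : ∀ a ∈ K, ∀ b ∈ K, a + b ∈ K := by
      intro a ha b hb
      have h1 : (1/2 : ℝ) • a + (1/2 : ℝ) • b ∈ K :=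
        hKcvx ha hb (by norm_num) (by norm_num) (by norm_num)
      have h2 := hKcone 2 (by norm_num) _ h1
      rwa [smul_add, smul_smul, smul_smul, show (2:ℝ) * (1/2) = 1 by norm_num, one_smul,
        one_smul] at h2
    have h0K : (0 : F) ∈ K := by
      obtain ⟨x0, hx0⟩ := hKne
      have ht : Filter.Tendsto (fun n : ℕ => (1 / ((n:ℝ) + 1)) • x0) Filter.atTop (nhds 0) := by
        simpa using (tendsto_one_div_add_atTop_nhds_zero_nat (𝕜 := ℝ)).smul_const x0
      exact hKcl.mem_of_tendsto ht
        (Filter.Eventually.of_forall fun n => hKcone _ (by positivity) _ hx0)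
    set x : F := p + c • g z with hxdef
    obtain ⟨u, huS, hud⟩ := hScl.exists_infDist_eq_dist hSne x
    have hmin : ∀ y ∈ S, dist x u ≤ dist x y := fun y hy => hud ▸ infDist_le_dist_of_mem hy
    have hvi := my_proj_vi hScvx huS hmin
    set v : F := x - u with hvdef
    have hmem_negu : -u ∈ K := Set.mem_neg.1 huS
    have h2u : (2:ℝ) • u ∈ S := by
      have h := hKcone 2 (by norm_num) _ hmem_negu
      rw [smul_neg] at h
      exact Set.mem_neg.2 h
    have h0S : (0:F) ∈ S := Set.mem_neg.2 (by rw [neg_zero]; exact h0K)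
    have huv : ⟪v, u⟫ = 0 := by
      have l1 := hvi 0 h0S
      have l2 := hvi ((2:ℝ) • u) h2u
      rw [show ((2:ℝ) • u - u) = u by module] at l2
      rw [zero_sub, inner_neg_right] at l1
      linarith
    have hvK : v ∈ {y : F | ∀ x ∈ K, 0 ≤ ⟪y, x⟫} := by
      intro k hk
      have hks : u - k ∈ S := by
        rw [hSdef, Set.mem_neg, show -(u - k) = -u + k by abel]
        exact haddK _ hmem_negu _ hk
      have h := hvi (u - k) hks
      rw [show (u - k) - u = -k by abel, inner_neg_right] at h
      linarith
    have hviq' : ∀ w ∈ {y : F | ∀ x ∈ K, 0 ≤ ⟪y, x⟫}, ⟪x - v, w - v⟫ ≤ 0 := by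
      intro w hw
      rw [show x - v = u by rw [hvdef]; abel]
      have hw1 := hw _ hmem_negu
      rw [inner_neg_right] at hw1
      rw [inner_sub_right]
      have hc1 := real_inner_comm u w
      have hc2 := real_inner_comm u v
      linarith
    have hDC : Convex ℝ {y : F | ∀ x ∈ K, 0 ≤ ⟪y, x⟫} := by
      intro y1 h1 y2 h2 a b ha hb _
      intro k hk
      rw [inner_add_left, real_inner_smul_left, real_inner_smul_left]
      have := mul_nonneg ha (h1 k hk)
      have := mul_nonneg hb (h2 k hk)
      linarith
    have hviq := my_proj_vi hDC hq1 hq2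
    have hqv : q = v := my_proj_unique hq1 hvK hviq hviq'
    have hgrad2 := my_sq_infDist_grad hScl hScvx huS hmin
    have hF : HasFDerivAt (fun y => infDist y S ^ 2)
        (InnerProductSpace.toDual ℝ F ((2:ℝ) • v)) x := hgrad2.hasFDerivAt
    have hA : HasFDerivAt (fun z : E => p + c • g z) (c • g' z) z :=
      ((hgdiff z).const_smul c).const_add p
    have hcomp : HasFDerivAt (fun z : E => infDist (p + c • g z) S ^ 2)
        ((InnerProductSpace.toDual ℝ F ((2:ℝ) • v)).comp (c • g' z)) z := HasFDerivAt.comp (g := fun y => infDist y S ^ 2) z hF hA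
    have hf : HasFDerivAt
        (fun z : E => (1/(2*c)) * (infDist (p + c • g z) S ^ 2 - ‖p‖ ^ 2))
        ((1/(2*c)) • ((InnerProductSpace.toDual ℝ F ((2:ℝ) • v)).comp (c • g' z))) z :=
      (hcomp.sub_const _).const_mul _
    rw [hasGradientAt_iff_hasFDerivAt]
    refine hf.congr_fderiv ?_
    refine ContinuousLinearMap.ext fun h => ?_
    simp only [InnerProductSpace.toDual_apply_apply, ContinuousLinearMap.smul_apply,
      ContinuousLinearMap.comp_apply, ContinuousLinearMap.coe_smul', Pi.smul_apply,
      ContinuousLinearMap.adjoint_inner_left, real_inner_smul_left, real_inner_smul_right,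
      smul_eq_mul, hqv]
    field_simp
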